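/- One has [E_m, E_{m'}] = 0 for all 1 ≤ m, m' ≤ j − i, so k is an abelian Lie subalgebra; m_1 is a Lie subalgebra; and [m_2, m_2] ⊆ m_1. Consequently m_1 is a Lie ideal of m_2, the sum m_2 = m_1 ⊕ k is direct, and m_2 is the semidirect product of Lie algebras m_1 ⋊ k. -/

import Mathlib

open Matrix

/-- The boxes of the right-aligned Young diagram of `μ` (0-based: box `⟨r, s⟩`
corresponds to the box in row `r+1`, `s+1`-th from the right end of its row). -/
abbrev Box (k : ℕ) (μ : Fin k → ℕ) := (r : Fin k) × Fin (μ r)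

/-- The nilpotent `e₁` of Jordan type `μ`, sending `b_{r,s} ↦ b_{r,s+1}`. -/
noncomputable def e1 (k : ℕ) (μ : Fin k → ℕ) : Matrix (Box k μ) (Box k μ) ℂ :=
  Matrix.of fun t u => if t.1 = u.1 ∧ t.2.val = u.2.val + 1 then 1 else 0

/-- The nilpotent `e₂ = e₁ + Σ_{s=1}^{μ_j} E_{(i,s),(j,s)}`. -/
noncomputable def e2 (k : ℕ) (μ : Fin k → ℕ) (i j : Fin k) : Matrix (Box k μ) (Box k μ) ℂ :=
  e1 k μ + Matrix.of fun t u => if t.1 = i ∧ u.1 = j ∧ t.2.val = u.2.val then 1 else 0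

/-- `E_m := Σ_{r=i}^{j−m} Σ_{s=1}^{μ_{r+m}} E_{(r+m,s),(r,s)}`. -/
noncomputable def Em (k : ℕ) (μ : Fin k → ℕ) (i j : Fin k) (m : ℕ) :
    Matrix (Box k μ) (Box k μ) ℂ :=
  Matrix.of fun t u =>
    if i ≤ u.1 ∧ t.1 ≤ j ∧ t.1.val = u.1.val + m ∧ t.2.val = u.2.val then 1 else 0

/-- `m₁ := span{E_{t,u} : s_t < s_u}`. -/
noncomputable def m1 (k : ℕ) (μ : Fin k → ℕ) : Submodule ℂ (Matrix (Box k μ) (Box k μ) ℂ) :=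
  Submodule.span ℂ
    {x | ∃ t u : Box k μ, t.2.val < u.2.val ∧ x = Matrix.single t u 1}

/-- `k := span{E_1, …, E_{j−i}}`. -/
noncomputable def fk (k : ℕ) (μ : Fin k → ℕ) (i j : Fin k) :
    Submodule ℂ (Matrix (Box k μ) (Box k μ) ℂ) :=
  Submodule.span ℂ {x | ∃ m : ℕ, 1 ≤ m ∧ m ≤ j.val - i.val ∧ x = Em k μ i j m}

/-- `m₂ := m₁ + k`. -/
noncomputable def m2 (k : ℕ) (μ : Fin k → ℕ) (i j : Fin k) :
    Submodule ℂ (Matrix (Box k μ) (Box k μ) ℂ) :=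
  m1 k μ ⊔ fk k μ i j

/-- The covering partition `λ`. -/
def lam (k : ℕ) (μ : Fin k → ℕ) (i j : Fin k) : Fin k → ℕ :=
  fun r => if r = i then μ i + 1 else if r = j then μ j - 1 else μ r

/-- `χ_a(x) = Tr(e_a x)`. -/
noncomputable def chi (k : ℕ) (μ : Fin k → ℕ) (ea x : Matrix (Box k μ) (Box k μ) ℂ) : ℂ :=
  (ea * x).trace

section Aux
variable {k : ℕ} {μ : Fin k → ℕ} {i j : Fin k}

lemma box_ext {a b : Box k μ} (h1 : (a.1 : ℕ) = (b.1 : ℕ)) (h2 : (a.2 : ℕ) = (b.2 : ℕ)) :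
    a = b := by
  obtain ⟨a1, a2⟩ := a; obtain ⟨b1, b2⟩ := b
  have h : a1 = b1 := Fin.ext h1
  subst h
  have : a2 = b2 := Fin.ext h2
  rw [this]

/-- Submodule of matrices with support in pairs satisfying `P`. -/
noncomputable def sSub (k : ℕ) (μ : Fin k → ℕ) (P : Box k μ → Box k μ → Prop) :
    Submodule ℂ (Matrix (Box k μ) (Box k μ) ℂ) where
  carrier := {x | ∀ p q, x p q ≠ 0 → P p q}
  add_mem' := by
    intro a b ha hb p q h
    by_cases h1 : a p q = 0
    · exact hb p q (by simpa [Matrix.add_apply, h1] using h)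
    · exact ha p q h1
  zero_mem' := by intro p q h; simp at h
  smul_mem' := by
    intro c a ha p q h
    refine ha p q fun h0 => h ?_
    simp [Matrix.smul_apply, h0]

lemma mem_sSub {P : Box k μ → Box k μ → Prop} {x : Matrix (Box k μ) (Box k μ) ℂ} :
    x ∈ sSub k μ P ↔ ∀ p q, x p q ≠ 0 → P p q := Iff.rfl

lemma mul_mem_sSub {P Q R : Box k μ → Box k μ → Prop}
    {a b : Matrix (Box k μ) (Box k μ) ℂ} (ha : a ∈ sSub k μ P) (hb : b ∈ sSub k μ Q)
    (h : ∀ p v q, P p v → Q v q → R p q) : a * b ∈ sSub k μ R := by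
  intro p q hpq
  have : ∃ v, a p v ≠ 0 ∧ b v q ≠ 0 := by
    by_contra h'
    push_neg at h'
    apply hpq
    rw [Matrix.mul_apply]
    apply Finset.sum_eq_zero
    intro v _
    rcases eq_or_ne (a p v) 0 with h0 | h0
    · simp [h0]
    · simp [h' v h0]
  obtain ⟨v, ha', hb'⟩ := this
  exact h p v q (ha p v ha') (hb v q hb')

lemma mem_m1_of_supp {x : Matrix (Box k μ) (Box k μ) ℂ}
    (h : ∀ p q : Box k μ, x p q ≠ 0 → p.2.val < q.2.val) : x ∈ m1 k μ := by
  rw [Matrix.matrix_eq_sum_single x]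
  refine Submodule.sum_mem _ fun p _ => Submodule.sum_mem _ fun q _ => ?_
  by_cases h0 : x p q = 0
  · simp [h0]
  · rw [show Matrix.single p q (x p q) = (x p q) • Matrix.single p q 1 by simp]
    exact Submodule.smul_mem _ _ (Submodule.subset_span ⟨p, q, h p q h0, rfl⟩)

lemma Em_mul_Em (hconst : ∀ r, i ≤ r → r ≤ j → μ r = μ i) {m m' : ℕ}
    (hm : 1 ≤ m) (hm' : 1 ≤ m') :
    Em k μ i j m * Em k μ i j m' = Em k μ i j (m + m') := by
  ext ⟨p1, p2⟩ ⟨q1, q2⟩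
  rw [Matrix.mul_apply]
  simp only [Em, Matrix.of_apply]
  by_cases hC : i ≤ q1 ∧ p1 ≤ j ∧ (p1 : ℕ) = (q1 : ℕ) + (m + m') ∧ (p2 : ℕ) = (q2 : ℕ)
  · rw [if_pos hC]
    obtain ⟨h1, h2, h3, h4⟩ := hC
    rw [Fin.le_def] at h1 h2
    have hv1 : (q1 : ℕ) + m' < k := by have := p1.isLt; omega
    have hle : (⟨(q1 : ℕ) + m', hv1⟩ : Fin k) ≤ j := by rw [Fin.le_def]; simp; omega
    have hiv : i ≤ (⟨(q1 : ℕ) + m', hv1⟩ : Fin k) := by rw [Fin.le_def]; simp; omega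
    have hμ : (q2 : ℕ) < μ ⟨(q1 : ℕ) + m', hv1⟩ := by
      rw [hconst _ hiv hle, ← hconst q1 (Fin.le_def.2 h1) (Fin.le_def.2 (by omega))]
      exact q2.isLt
    rw [Finset.sum_eq_single (⟨⟨(q1 : ℕ) + m', hv1⟩, ⟨(q2 : ℕ), hμ⟩⟩ : Box k μ)]
    · rw [if_pos, if_pos, one_mul]
      · exact ⟨Fin.le_def.2 h1, hle, rfl, rfl⟩
      · exact ⟨hiv, Fin.le_def.2 h2, by simp; omega, h4⟩
    · intro v _ hv
      by_cases hA : i ≤ v.1 ∧ p1 ≤ j ∧ (p1 : ℕ) = (v.1 : ℕ) + m ∧ (p2 : ℕ) = (v.2 : ℕ)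
      · by_cases hB : i ≤ q1 ∧ v.1 ≤ j ∧ (v.1 : ℕ) = (q1 : ℕ) + m' ∧ (v.2 : ℕ) = (q2 : ℕ)
        · exact absurd (box_ext hB.2.2.1 hB.2.2.2) hv
        · rw [if_neg hB, mul_zero]
      · rw [if_neg hA, zero_mul]
    · intro h; exact absurd (Finset.mem_univ _) h
  · rw [if_neg hC]
    apply Finset.sum_eq_zero
    intro v _
    by_cases hA : i ≤ v.1 ∧ p1 ≤ j ∧ (p1 : ℕ) = (v.1 : ℕ) + m ∧ (p2 : ℕ) = (v.2 : ℕ)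
    · by_cases hB : i ≤ q1 ∧ v.1 ≤ j ∧ (v.1 : ℕ) = (q1 : ℕ) + m' ∧ (v.2 : ℕ) = (q2 : ℕ)
      · exact absurd ⟨hB.1, hA.2.1, by omega, by omega⟩ hC
      · rw [if_neg hB, mul_zero]
    · rw [if_neg hA, zero_mul]

lemma span_comm_sub_mem {M : Type*} [Ring M] [Algebra ℂ M]
    {S T : Set M} {N : Submodule ℂ M}
    (h : ∀ a ∈ S, ∀ b ∈ T, a * b - b * a ∈ N) :
    ∀ x ∈ Submodule.span ℂ S, ∀ y ∈ Submodule.span ℂ T, x * y - y * x ∈ N := by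
  intro x hx y hy
  have step1 : ∀ a ∈ S, ∀ y ∈ Submodule.span ℂ T, a * y - y * a ∈ N := by
    intro a haS
    have : Submodule.span ℂ T ≤ N.comap (LinearMap.mulLeft ℂ a - LinearMap.mulRight ℂ a) :=
      Submodule.span_le.2 fun b hb => by
        simpa using h a haS b hb
    intro y hy
    simpa using this hy
  have step2 : Submodule.span ℂ S ≤ N.comap (LinearMap.mulRight ℂ y - LinearMap.mulLeft ℂ y) :=
    Submodule.span_le.2 fun a ha => by simpa using step1 a ha y hy
  simpa using step2 hx

end Aux

/-- `[E_m, E_{m'}] = 0`, so `k` is an abelian Lie subalgebra; `m₁` is a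
Lie subalgebra; `[m₂, m₂] ⊆ m₁`; consequently `m₁` is a Lie ideal of `m₂`, the sum
`m₂ = m₁ ⊕ k` is direct, and `m₂ = m₁ ⋊ k`. -/
theorem stmt9
    (k : ℕ) (n : ℕ) (μ : Fin k → ℕ)
    (hpos : ∀ r, 0 < μ r) (hanti : Antitone μ)
    (hn : ∑ r : Fin k, μ r = n)
    (i j : Fin k) (hij : i < j)
    (hi : ∀ r, r < i → μ i < μ r)
    (hj : ∀ r, j < r → μ r < μ j)
    (hcase : (j : ℕ) = (i : ℕ) + 1 ∨ μ i = μ j)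
    :
    (∀ m m' : ℕ, 1 ≤ m → m ≤ j.val - i.val → 1 ≤ m' → m' ≤ j.val - i.val →
        Em k μ i j m * Em k μ i j m' - Em k μ i j m' * Em k μ i j m = 0)
    ∧ (∀ x ∈ fk k μ i j, ∀ y ∈ fk k μ i j, x * y - y * x = 0)
    ∧ (∀ x ∈ m1 k μ, ∀ y ∈ m1 k μ, x * y - y * x ∈ m1 k μ)
    ∧ (∀ x ∈ m2 k μ i j, ∀ y ∈ m2 k μ i j, x * y - y * x ∈ m1 k μ)
    ∧ (∀ x ∈ m2 k μ i j, ∀ y ∈ m1 k μ, x * y - y * x ∈ m1 k μ)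
    ∧ m1 k μ ⊓ fk k μ i j = ⊥
    ∧ m2 k μ i j = m1 k μ ⊔ fk k μ i j := by
  -- generating sets
  have hcomm : ∀ m m' : ℕ, 1 ≤ m → m ≤ j.val - i.val → 1 ≤ m' → m' ≤ j.val - i.val →
      Em k μ i j m * Em k μ i j m' = Em k μ i j m' * Em k μ i j m := by
    intro m m' h1 h2 h3 h4
    rcases hcase with hc | hc
    · have hm1 : m = 1 := by omega
      have hm'1 : m' = 1 := by omega
      rw [hm1, hm'1]
    · have hconst : ∀ r, i ≤ r → r ≤ j → μ r = μ i := by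
        intro r hr1 hr2
        have ha1 := hanti hr1
        have ha2 := hanti hr2
        omega
      rw [Em_mul_Em hconst h1 h3, Em_mul_Em hconst h3 h1, Nat.add_comm]
  set A : Set (Matrix (Box k μ) (Box k μ) ℂ) :=
    {x | ∃ t u : Box k μ, t.2.val < u.2.val ∧ x = Matrix.single t u 1} with hA
  set B : Set (Matrix (Box k μ) (Box k μ) ℂ) :=
    {x | ∃ m : ℕ, 1 ≤ m ∧ m ≤ j.val - i.val ∧ x = Em k μ i j m} with hB
  have hm1span : m1 k μ = Submodule.span ℂ A := rfl
  have hfkspan : fk k μ i j = Submodule.span ℂ B := rfl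
  have hm2span : m2 k μ i j = Submodule.span ℂ (A ∪ B) := (Submodule.span_union A B).symm
  have hA_supp : ∀ a ∈ A, a ∈ sSub k μ (fun p q => p.2.val < q.2.val) := by
    rintro a ⟨t, u, htu, rfl⟩ p q h
    by_cases he : t = p ∧ u = q
    · obtain ⟨rfl, rfl⟩ := he; exact htu
    · exact absurd (by simp [Matrix.single, Matrix.of_apply, he]) h
  have hB_supp : ∀ b ∈ B, b ∈ sSub k μ (fun p q => p.2.val = q.2.val) := by
    rintro b ⟨m, hm1, hm2, rfl⟩ p q h
    by_cases he : i ≤ q.1 ∧ p.1 ≤ j ∧ p.1.val = q.1.val + m ∧ p.2.val = q.2.val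
    · exact he.2.2.2
    · exact absurd (by simp [Em, Matrix.of_apply, he]) h
  have hgen : ∀ a ∈ A ∪ B, ∀ b ∈ A ∪ B, a * b - b * a ∈ m1 k μ := by
    rintro a (ha | ha) b (hb | hb)
    · exact mem_m1_of_supp (Submodule.sub_mem _
        (mul_mem_sSub (hA_supp a ha) (hA_supp b hb) (fun p v q h1 h2 => by omega))
        (mul_mem_sSub (hA_supp b hb) (hA_supp a ha) (fun p v q h1 h2 => by omega)))
    · exact mem_m1_of_supp (Submodule.sub_mem _
        (mul_mem_sSub (hA_supp a ha) (hB_supp b hb) (fun p v q h1 h2 => by omega))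
        (mul_mem_sSub (hB_supp b hb) (hA_supp a ha) (fun p v q h1 h2 => by omega)))
    · exact mem_m1_of_supp (Submodule.sub_mem _
        (mul_mem_sSub (hB_supp a ha) (hA_supp b hb) (fun p v q h1 h2 => by omega))
        (mul_mem_sSub (hA_supp b hb) (hB_supp a ha) (fun p v q h1 h2 => by omega)))
    · obtain ⟨m, hm1, hm2, rfl⟩ := ha
      obtain ⟨m', hm1', hm2', rfl⟩ := hb
      rw [hcomm m m' hm1 hm2 hm1' hm2', sub_self]
      exact Submodule.zero_mem _
  refine ⟨?_, ?_, ?_, ?_, ?_, ?_, rfl⟩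
  · intro m m' h1 h2 h3 h4
    rw [hcomm m m' h1 h2 h3 h4, sub_self]
  · intro x hx y hy
    rw [hfkspan] at hx hy
    have hgenB : ∀ a ∈ B, ∀ b ∈ B, a * b - b * a ∈ (⊥ : Submodule ℂ (Matrix (Box k μ) (Box k μ) ℂ)) := by
      rintro a ⟨m, hm1, hm2, rfl⟩ b ⟨m', hm1', hm2', rfl⟩
      rw [hcomm m m' hm1 hm2 hm1' hm2', sub_self]
      exact Submodule.zero_mem _
    exact Submodule.mem_bot ℂ |>.1 (span_comm_sub_mem hgenB x hx y hy)
  · intro x hx y hy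
    rw [hm1span] at hx hy
    exact span_comm_sub_mem (fun a ha b hb => hgen a (Or.inl ha) b (Or.inl hb)) x hx y hy
  · intro x hx y hy
    rw [hm2span] at hx hy
    exact span_comm_sub_mem hgen x hx y hy
  · intro x hx y hy
    rw [hm2span] at hx
    rw [hm1span] at hy
    exact span_comm_sub_mem (fun a ha b hb => hgen a ha b (Or.inl hb)) x hx y hy
  · rw [eq_bot_iff]
    intro x hx
    obtain ⟨hx1, hx2⟩ := Submodule.mem_inf.1 hx
    have s1 : x ∈ sSub k μ (fun p q => p.2.val < q.2.val) :=
      (Submodule.span_le.2 hA_supp) (hm1span ▸ hx1)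
    have s2 : x ∈ sSub k μ (fun p q => p.2.val = q.2.val) :=
      (Submodule.span_le.2 hB_supp) (hfkspan ▸ hx2)
    rw [Submodule.mem_bot]
    ext p q
    simp only [Matrix.zero_apply]
    by_contra h
    have h1 := s1 p q h
    have h2 := s2 p q h
    omega
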